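/- If a cooperative game (N, v) is convex (supermodular), i.e., v(S ∪ T) + v(S ∩ T) ≥ v(S) + v(T) for all coalitions S, T ⊆ N, then the marginal-contribution vector associated to any ordering of the players lies in the core: fixing an ordering i_1,...,i_n of N and setting x_{i_k} = v({i_1,...,i_k}) − v({i_1,...,i_{k−1}}), the allocation x satisfies ∑_{i∈N} x_i = v(N) and ∑_{i∈S} x_i ≥ v(S) for all S ⊆ N. -/

import Mathlib

/-- The coalition of the first `k` players in the ordering `σ`. -/
noncomputable def prefixCoalition {N : Type*} [Fintype N] [DecidableEq N] {n : ℕ}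
    (σ : Fin n ≃ N) (k : ℕ) : Finset N :=
  (Finset.univ.filter (fun j : Fin n => (j : ℕ) < k)).image σ

/-- The marginal-contribution allocation associated with the ordering `σ`. -/
noncomputable def marginalVector {N : Type*} [Fintype N] [DecidableEq N] {n : ℕ}
    (v : Finset N → ℝ) (σ : Fin n ≃ N) (i : N) : ℝ :=
  v (prefixCoalition σ ((σ.symm i : ℕ) + 1)) - v (prefixCoalition σ (σ.symm i))

lemma mem_prefixCoalition {N : Type*} [Fintype N] [DecidableEq N] {n : ℕ}
    (σ : Fin n ≃ N) (k : ℕ) (i : N) :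
    i ∈ prefixCoalition σ k ↔ (σ.symm i : ℕ) < k := by
  simp only [prefixCoalition, Finset.mem_image, Finset.mem_filter, Finset.mem_univ, true_and]
  constructor
  · rintro ⟨j, hj, rfl⟩; simpa using hj
  · intro h; exact ⟨σ.symm i, h, by simp⟩

lemma prefixCoalition_zero {N : Type*} [Fintype N] [DecidableEq N] {n : ℕ}
    (σ : Fin n ≃ N) : prefixCoalition σ 0 = ∅ := by
  ext i; simp [mem_prefixCoalition]

lemma prefixCoalition_top {N : Type*} [Fintype N] [DecidableEq N] {n : ℕ}
    (σ : Fin n ≃ N) : prefixCoalition σ n = Finset.univ := by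
  ext i; simp [mem_prefixCoalition, (σ.symm i).isLt]

lemma prefixCoalition_succ {N : Type*} [Fintype N] [DecidableEq N] {n : ℕ}
    (σ : Fin n ≃ N) (k : ℕ) (hk : k < n) :
    prefixCoalition σ (k + 1) = insert (σ ⟨k, hk⟩) (prefixCoalition σ k) := by
  ext i
  simp only [mem_prefixCoalition, Finset.mem_insert]
  constructor
  · intro h
    rcases Nat.lt_succ_iff_lt_or_eq.mp h with h | h
    · exact Or.inr (by simpa [mem_prefixCoalition] using h)
    · left
      have : σ.symm i = (⟨k, hk⟩ : Fin n) := Fin.ext h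
      rw [← this]; simp
  · rintro (rfl | h)
    · simp
    · exact Nat.lt_succ_of_lt (by simpa [mem_prefixCoalition] using h)

lemma prefixCoalition_succ_ge {N : Type*} [Fintype N] [DecidableEq N] {n : ℕ}
    (σ : Fin n ≃ N) (k : ℕ) (hk : ¬ k < n) :
    prefixCoalition σ (k + 1) = prefixCoalition σ k := by
  ext i
  simp only [mem_prefixCoalition]
  have := (σ.symm i).isLt
  omega

lemma marginalVector_apply {N : Type*} [Fintype N] [DecidableEq N] {n : ℕ}
    (v : Finset N → ℝ) (σ : Fin n ≃ N) (k : Fin n) :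
    marginalVector v σ (σ k) =
      v (prefixCoalition σ ((k : ℕ) + 1)) - v (prefixCoalition σ (k : ℕ)) := by
  simp [marginalVector]

/-- For a convex (supermodular) cooperative game, the marginal-contribution vector
of any ordering of the players lies in the core. -/
theorem marginal_vector_in_core_of_convex {N : Type*} [Fintype N] [DecidableEq N]
    {n : ℕ} (v : Finset N → ℝ) (hv : v ∅ = 0)
    (hconvex : ∀ S T : Finset N, v S + v T ≤ v (S ∪ T) + v (S ∩ T))
    (σ : Fin n ≃ N) :
    (∑ i, marginalVector v σ i = v Finset.univ) ∧
      ∀ S : Finset N, v S ≤ ∑ i ∈ S, marginalVector v σ i := by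
  constructor
  · have h1 : ∑ i, marginalVector v σ i = ∑ k : Fin n, marginalVector v σ (σ k) :=
      (Equiv.sum_comp σ _).symm
    rw [h1]
    have h2 : ∀ k : Fin n, marginalVector v σ (σ k) =
        (fun m : ℕ => v (prefixCoalition σ m)) ((k : ℕ) + 1) -
        (fun m : ℕ => v (prefixCoalition σ m)) (k : ℕ) := fun k => marginalVector_apply v σ k
    rw [Finset.sum_congr rfl (fun k _ => h2 k),
      Fin.sum_univ_eq_sum_range (fun m => (fun m : ℕ => v (prefixCoalition σ m)) (m + 1) -
        (fun m : ℕ => v (prefixCoalition σ m)) m) n,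
      Finset.sum_range_sub (fun m : ℕ => v (prefixCoalition σ m)) n,
      prefixCoalition_zero, prefixCoalition_top, hv, sub_zero]
  · intro S
    have key : ∀ k : ℕ,
        v (S ∩ prefixCoalition σ k) ≤ ∑ i ∈ S ∩ prefixCoalition σ k, marginalVector v σ i := by
      intro k
      induction k with
      | zero => simp [prefixCoalition_zero, hv]
      | succ k ih =>
        by_cases hk : k < n
        · rw [prefixCoalition_succ σ k hk]
          set i := σ ⟨k, hk⟩ with hi
          have hnm : i ∉ prefixCoalition σ k := by simp [mem_prefixCoalition, hi]
          by_cases hiS : i ∈ S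
          · have h1 : S ∩ insert i (prefixCoalition σ k) =
                insert i (S ∩ prefixCoalition σ k) := by
              ext j
              simp only [Finset.mem_inter, Finset.mem_insert]
              constructor
              · rintro ⟨hjS, rfl | h⟩
                · exact Or.inl rfl
                · exact Or.inr ⟨hjS, h⟩
              · rintro (rfl | ⟨h1, h2⟩)
                · exact ⟨hiS, Or.inl rfl⟩
                · exact ⟨h1, Or.inr h2⟩
            rw [h1, Finset.sum_insert (by simp [hnm])]
            have hmv : marginalVector v σ i =
                v (prefixCoalition σ (k + 1)) - v (prefixCoalition σ k) :=
              marginalVector_apply v σ ⟨k, hk⟩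
            have hconv := hconvex (insert i (S ∩ prefixCoalition σ k)) (prefixCoalition σ k)
            have hu : insert i (S ∩ prefixCoalition σ k) ∪ prefixCoalition σ k =
                prefixCoalition σ (k + 1) := by
              rw [prefixCoalition_succ σ k hk]
              ext j; simp only [Finset.mem_union, Finset.mem_insert, Finset.mem_inter]
              constructor
              · rintro ((rfl | ⟨h1, h2⟩) | h)
                · exact Or.inl rfl
                · exact Or.inr h2
                · exact Or.inr h
              · rintro (rfl | h)
                · exact Or.inl (Or.inl rfl)
                · exact Or.inr h
            have hn : insert i (S ∩ prefixCoalition σ k) ∩ prefixCoalition σ k =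
                S ∩ prefixCoalition σ k := by
              ext j
              simp only [Finset.mem_inter, Finset.mem_insert]
              constructor
              · rintro ⟨rfl | ⟨h1, h2⟩, h3⟩
                · exact absurd h3 hnm
                · exact ⟨h1, h2⟩
              · tauto
            rw [hu, hn] at hconv
            linarith
          · have h1 : S ∩ insert i (prefixCoalition σ k) = S ∩ prefixCoalition σ k := by
              ext j
              simp only [Finset.mem_inter, Finset.mem_insert]
              constructor
              · rintro ⟨hjS, rfl | h⟩
                · exact absurd hjS hiS
                · exact ⟨hjS, h⟩
              · tauto
            rw [h1]; exact ih
        · rw [prefixCoalition_succ_ge σ k hk]; exact ih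
    have := key n
    rwa [prefixCoalition_top, Finset.inter_univ] at this
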